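/- arXiv:1708.08888 — 3 statements merged into one kernel-verified Lean document; each statement's English description precedes it below -/
import Mathlib

section
/- Let α ∈ 𝓕_m(Ω) and r > 0. For every u ∈ ℝ^{2N} with ru + α̂ ∈ 𝓕_N(Ω) one has the identity H(ru + α̂) = H₀(u) + F(ru) − (1/(2π))·(Σ_{k=1}^{m} Σ_{j≠j'} ΓᵏⱼΓᵏⱼ')·log r. -/
noncomputable section

open Real

/-- The plane `ℝ²` with its Euclidean structure. -/
abbrev R2 : Type := EuclideanSpace ℝ (Fin 2)

/-- The standard symplectic matrix `J` (rotation by `-π/2`): `J(x₁,x₂) = (x₂,-x₁)`. -/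
def Jrot (x : R2) : R2 := (WithLp.equiv 2 (Fin 2 → ℝ)).symm ![x 1, -(x 0)]

/-- The rotation `e^{θJ}` of the plane. -/
def rotate (θ : ℝ) (x : R2) : R2 :=
  (WithLp.equiv 2 (Fin 2 → ℝ)).symm
    ![Real.cos θ * x 0 + Real.sin θ * x 1, -Real.sin θ * x 0 + Real.cos θ * x 1]

/-- The generalized Green's function `G(x,y) = -(1/2π) log|x-y| - g(x,y)`. -/
def Gf (g : R2 → R2 → ℝ) (x y : R2) : ℝ := -(1 / (2 * π)) * Real.log ‖x - y‖ - g x y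

/-- `z` is a configuration of pairwise distinct points of `Ω`. -/
def Conf {ι : Type*} (Ω : Set R2) (z : ι → R2) : Prop :=
  (∀ i, z i ∈ Ω) ∧ ∀ i i', i ≠ i' → z i ≠ z i'

/-- The `m`-vortex Hamiltonian `𝓗`. -/
def mHam {m : ℕ} (g : R2 → R2 → ℝ) (Γ : Fin m → ℝ) (a : Fin m → R2) : ℝ :=
  (∑ k, ∑ k', if k ≠ k' then Γ k * Γ k' * Gf g (a k) (a k') else 0)
    - ∑ k, Γ k ^ 2 * g (a k) (a k)

/-- Partial gradient `∇_{zᵢ} f(z) ∈ ℝ²` of a function of several planar variables. -/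
def pgrad {ι : Type*} [DecidableEq ι] (f : (ι → R2) → ℝ) (z : ι → R2) (i : ι) : R2 :=
  gradient (fun p => f (Function.update z i p)) (z i)

/-- `i`-th block of the Hessian of `f` at `z` applied to `w`, `(∇²f(z)w)ᵢ ∈ ℝ²`. -/
def hessVec {ι : Type*} [Fintype ι] [DecidableEq ι] (f : (ι → R2) → ℝ) (z w : ι → R2)
    (i : ι) : R2 :=
  gradient (fun p => fderiv ℝ f (Function.update z i p) w) (z i)

/-- Kernel of the Hessian `∇²f(z)` viewed as a map into the dual space. -/
def hessKer {ι : Type*} [Fintype ι] (f : (ι → R2) → ℝ) (z : ι → R2) :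
    Submodule ℝ (ι → R2) :=
  LinearMap.ker ((fderiv ℝ (fderiv ℝ f) z : (ι → R2) →L[ℝ] (ι → R2) →L[ℝ] ℝ) : (ι → R2) →ₗ[ℝ] (ι → R2) →L[ℝ] ℝ)

/-- `z : ℝ → (ι → ℝ²)` solves the vortex system `Γᵢ żᵢ = J ∇_{zᵢ} Ham(z)` on `I`. -/
def IsVortexSol {ι : Type*} [Fintype ι] [DecidableEq ι] (Γv : ι → ℝ)
    (Ham : (ι → R2) → ℝ) (I : Set ℝ) (z : ℝ → ι → R2) : Prop :=
  ∀ t ∈ I, ∀ i, HasDerivAt (fun s => Γv i • z s i) (Jrot (pgrad Ham (z t) i)) t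

/-- The whole-plane `n`-vortex Hamiltonian. -/
def planeHam {n : ℕ} (Γk : Fin n → ℝ) (z : Fin n → R2) : ℝ :=
  -(1 / (2 * π)) * ∑ j, ∑ j', if j ≠ j' then Γk j * Γk j' * Real.log ‖z j - z j'‖ else 0

/-- `Z` is a relative equilibrium `Z(t) = e^{±J t/ordσ} z⁰` of the whole-plane system. -/
def IsRelEq {n : ℕ} (Γk : Fin n → ℝ) (ordσ : ℕ) (Z : ℝ → Fin n → R2) : Prop :=
  (∃ ω : ℝ, (ω = 1 ∨ ω = -1) ∧ ∃ z0 : Fin n → R2,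
      (∀ j j', j ≠ j' → z0 j ≠ z0 j') ∧ ∀ t j, Z t j = rotate (ω * t / (ordσ : ℝ)) (z0 j)) ∧
  IsVortexSol Γk (planeHam Γk) Set.univ Z

/-- `w` solves the linearization `Γⱼẇⱼ = J(∇²H_{ℝ²}(Z(t))w)ⱼ` and is `σ`-symmetric. -/
def IsLinSol {n : ℕ} (Γk : Fin n → ℝ) (σ : Equiv.Perm (Fin n)) (Z : ℝ → Fin n → R2)
    (w : ℝ → Fin n → R2) : Prop :=
  (∀ t j, HasDerivAt (fun s => Γk j • w s j)
      (Jrot (hessVec (planeHam Γk) (Z t) (w t) j)) t) ∧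
  ∀ t j, w (t + 2 * π) (σ⁻¹ j) = w t j

/-- `σ`-nondegeneracy of a relative equilibrium: `σ*Z(·+2π) = Z` and the space of
`σ`-symmetric solutions of the linearized equation is exactly 3-dimensional. -/
def SigmaNondeg {n : ℕ} (Γk : Fin n → ℝ) (σ : Equiv.Perm (Fin n)) (Z : ℝ → Fin n → R2) :
    Prop :=
  (∀ t j, Z (t + 2 * π) (σ⁻¹ j) = Z t j) ∧
  ∃ W : Fin 3 → ℝ → Fin n → R2,
    LinearIndependent ℝ W ∧ (∀ p, IsLinSol Γk σ Z (W p)) ∧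
    ∀ w, IsLinSol Γk σ Z w → w ∈ Submodule.span ℝ (Set.range W)

/-- The `N`-vortex Hamiltonian `H` on clustered configurations. -/
def NHam {m : ℕ} {Nk : Fin m → ℕ} (g : R2 → R2 → ℝ)
    (Γc : (k : Fin m) → Fin (Nk k) → ℝ) (z : ((k : Fin m) × Fin (Nk k)) → R2) : ℝ :=
  (∑ i, ∑ i', if i ≠ i' then Γc i.1 i.2 * Γc i'.1 i'.2 * Gf g (z i) (z i') else 0)
    - ∑ i, Γc i.1 i.2 ^ 2 * g (z i) (z i)

/-- Square of the `H¹_T` distance of two (`C¹`, `T`-periodic) curves. -/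
def H1distSq {ι : Type*} [Fintype ι] (T : ℝ) (u v : ℝ → ι → R2) : ℝ :=
  ∫ t in (0:ℝ)..T,
    ((∑ i, ‖u t i - v t i‖ ^ 2) +
      ∑ i, ‖deriv (fun s => u s i) t - deriv (fun s => v s i) t‖ ^ 2)

/-- The function `F` appearing in the rescaled Hamiltonian. -/
def Ffun {m : ℕ} {Nk : Fin m → ℕ} (g : R2 → R2 → ℝ)
    (Γc : (k : Fin m) → Fin (Nk k) → ℝ) (α : Fin m → R2)
    (z : ((k : Fin m) × Fin (Nk k)) → R2) : ℝ :=
  (∑ i, ∑ i', if i.1 ≠ i'.1 then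
      Γc i.1 i.2 * Γc i'.1 i'.2 * Gf g (z i + α i.1) (z i' + α i'.1) else 0)
    - ∑ k, ∑ j, ∑ j', Γc k j * Γc k j' * g (z ⟨k, j⟩ + α k) (z ⟨k, j'⟩ + α k)

/-- The decoupled limit Hamiltonian `H₀(u) = Σₖ Hᵏ_{ℝ²}(uᵏ)`. -/
def H0 {m : ℕ} {Nk : Fin m → ℕ} (Γc : (k : Fin m) → Fin (Nk k) → ℝ)
    (u : ((k : Fin m) × Fin (Nk k)) → R2) : ℝ :=
  ∑ k, planeHam (Γc k) (fun j => u ⟨k, j⟩)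

/-- The rescaled Hamiltonian `H_r(u) = H₀(u) + F(ru) - 𝓗(α)`. -/
def Hr {m : ℕ} {Nk : Fin m → ℕ} (g : R2 → R2 → ℝ) (Γ : Fin m → ℝ)
    (Γc : (k : Fin m) → Fin (Nk k) → ℝ) (α : Fin m → R2) (r : ℝ)
    (u : ((k : Fin m) × Fin (Nk k)) → R2) : ℝ :=
  H0 Γc u + Ffun g Γc α (r • u) - mHam g Γ α

/-- `H(ru+α̂) = H₀(u) + F(ru) - (1/2π)(Σₖ Σ_{j≠j'} ΓᵏⱼΓᵏⱼ')·log r`. -/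
theorem statement4
    (Ω : Set R2) (hΩopen : IsOpen Ω) (hΩconn : IsConnected Ω)
    (g : R2 → R2 → ℝ)
    (hg : ContDiffOn ℝ 2 (fun p : R2 × R2 => g p.1 p.2) (Ω ×ˢ Ω))
    (hgsymm : ∀ x y, g x y = g y x)
    (m l : ℕ) (hl : 1 ≤ l) (hlm : l ≤ m)
    (Γ : Fin m → ℝ) (hΓ : ∀ k, Γ k ≠ 0)
    (Nk : Fin m → ℕ)
    (hNkhead : ∀ k : Fin m, (k : ℕ) < l → 2 ≤ Nk k)
    (hNktail : ∀ k : Fin m, l ≤ (k : ℕ) → Nk k = 1)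
    (Γc : (k : Fin m) → Fin (Nk k) → ℝ) (hΓc : ∀ k j, Γc k j ≠ 0)
    (hΓctail : ∀ k : Fin m, l ≤ (k : ℕ) → ∀ j, Γc k j = Γ k)
    (α : Fin m → R2) (hα : Conf Ω α)
    (r : ℝ) (hr : 0 < r)
    (u : ((k : Fin m) × Fin (Nk k)) → R2)
    (hu : Conf Ω (fun i => r • u i + α i.1)) :
    NHam g Γc (fun i => r • u i + α i.1)
      = H0 Γc u + Ffun g Γc α (r • u)
        - 1 / (2 * π) * (∑ k, ∑ j, ∑ j', if j ≠ j' then Γc k j * Γc k j' else 0)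
          * Real.log r := by
  classical
  have hud : ∀ i i' : (k : Fin m) × Fin (Nk k), i ≠ i' → i.1 = i'.1 →
      u i ≠ u i' := by
    intro i i' hne h1 heq
    exact hu.2 i i' hne (by simp only [heq, h1])
  have hlog : ∀ i i' : (k : Fin m) × Fin (Nk k), i ≠ i' → i.1 = i'.1 →
      Real.log ‖(r • u i + α i.1) - (r • u i' + α i'.1)‖
        = Real.log r + Real.log ‖u i - u i'‖ := by
    intro i i' hne h1
    have hd : (r • u i + α i.1) - (r • u i' + α i'.1) = r • (u i - u i') := by
      rw [h1, smul_sub]; abel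
    rw [hd, norm_smul, Real.norm_of_nonneg hr.le,
      Real.log_mul hr.ne' (norm_ne_zero_iff.2 (sub_ne_zero.2 (hud i i' hne h1)))]
  have diag : ∀ f : ((k : Fin m) × Fin (Nk k)) → ℝ, ∑ i, f i = ∑ k, ∑ j, f ⟨k, j⟩ := by
    intro f; rw [← Finset.univ_sigma_univ, Finset.sum_sigma]
  have key : ∀ A : ((k : Fin m) × Fin (Nk k)) → ((k : Fin m) × Fin (Nk k)) → ℝ,
      (∑ i, ∑ i', if i.1 = i'.1 then A i i' else 0)
        = ∑ k, ∑ j, ∑ j', A ⟨k, j⟩ ⟨k, j'⟩ := by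
    intro A
    rw [diag (fun i => ∑ i', if i.1 = i'.1 then A i i' else 0)]
    refine Finset.sum_congr rfl fun k _ => Finset.sum_congr rfl fun j _ => ?_
    rw [diag (fun i' => if (⟨k, j⟩ : (k : Fin m) × Fin (Nk k)).1 = i'.1
      then A ⟨k, j⟩ i' else 0)]
    have h1 : ∀ k' : Fin m,
        (∑ j' : Fin (Nk k'), if (⟨k, j⟩ : (k : Fin m) × Fin (Nk k)).1
            = (⟨k', j'⟩ : (k : Fin m) × Fin (Nk k)).1 then A ⟨k, j⟩ ⟨k', j'⟩ else 0)
          = if k = k' then ∑ j' : Fin (Nk k'), A ⟨k, j⟩ ⟨k', j'⟩ else 0 := by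
      intro k'
      by_cases h : k = k' <;> simp [h]
    rw [Finset.sum_congr rfl fun k' _ => h1 k', Finset.sum_ite_eq]
    simp
  set T : ((k : Fin m) × Fin (Nk k)) → ((k : Fin m) × Fin (Nk k)) → ℝ :=
    fun i i' => Γc i.1 i.2 * Γc i'.1 i'.2
      * Gf g (r • u i + α i.1) (r • u i' + α i'.1) with hT
  -- abbreviations for the big sums
  set A : ℝ := ∑ i, ∑ i', if i.1 ≠ i'.1 then T i i' else 0 with hA
  set C : ℝ := ∑ k, ∑ j, ∑ j', if j ≠ j' then Γc k j * Γc k j' else 0 with hC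
  set L : ℝ := ∑ k, ∑ j, ∑ j',
    if j ≠ j' then Γc k j * Γc k j' * Real.log ‖u ⟨k, j⟩ - u ⟨k, j'⟩‖ else 0 with hL
  set Gs : ℝ := ∑ k, ∑ j, ∑ j', if j ≠ j' then
    Γc k j * Γc k j' * g (r • u ⟨k, j⟩ + α k) (r • u ⟨k, j'⟩ + α k) else 0 with hGs
  set D : ℝ := ∑ i : (k : Fin m) × Fin (Nk k),
    Γc i.1 i.2 ^ 2 * g (r • u i + α i.1) (r • u i + α i.1) with hD
  -- split of the main double sum
  have hsplit : (∑ i, ∑ i', if i ≠ i' then T i i' else 0)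
      = A + ∑ i, ∑ i', if i.1 = i'.1 then (if i ≠ i' then T i i' else 0) else 0 := by
    rw [hA, ← Finset.sum_add_distrib]
    refine Finset.sum_congr rfl fun i _ => ?_
    rw [← Finset.sum_add_distrib]
    refine Finset.sum_congr rfl fun i' _ => ?_
    by_cases h1 : i.1 = i'.1
    · simp [h1]
    · have h2 : i ≠ i' := fun h => h1 (by rw [h])
      simp [h1, h2]
  -- the same-cluster part
  have hP2 : (∑ i, ∑ i', if i.1 = i'.1 then (if i ≠ i' then T i i' else 0) else 0)
      = C * (-(1 / (2 * π)) * Real.log r) + (-(1 / (2 * π))) * L - Gs := by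
    rw [key (fun i i' => if i ≠ i' then T i i' else 0)]
    have hterm : ∀ (k : Fin m) (j j' : Fin (Nk k)),
        (if (⟨k, j⟩ : (k : Fin m) × Fin (Nk k)) ≠ ⟨k, j'⟩ then T ⟨k, j⟩ ⟨k, j'⟩ else 0)
          = (if j ≠ j' then Γc k j * Γc k j' else 0) * (-(1 / (2 * π)) * Real.log r)
            + (-(1 / (2 * π)))
              * (if j ≠ j' then Γc k j * Γc k j' * Real.log ‖u ⟨k, j⟩ - u ⟨k, j'⟩‖ else 0)
            - (if j ≠ j' then
                Γc k j * Γc k j' * g (r • u ⟨k, j⟩ + α k) (r • u ⟨k, j'⟩ + α k) else 0) := by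
      intro k j j'
      by_cases h : j = j'
      · subst h; simp
      · have hne : (⟨k, j⟩ : (k : Fin m) × Fin (Nk k)) ≠ ⟨k, j'⟩ := by simp [h]
        rw [if_pos hne, if_pos h, if_pos h, if_pos h, hT]
        simp only [Gf]
        rw [hlog ⟨k, j⟩ ⟨k, j'⟩ hne rfl]
        ring
    calc (∑ k, ∑ j, ∑ j',
          if (⟨k, j⟩ : (k : Fin m) × Fin (Nk k)) ≠ ⟨k, j'⟩ then T ⟨k, j⟩ ⟨k, j'⟩ else 0)
        = ∑ k, ∑ j, ∑ j',
            ((if j ≠ j' then Γc k j * Γc k j' else 0) * (-(1 / (2 * π)) * Real.log r)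
            + (-(1 / (2 * π)))
              * (if j ≠ j' then Γc k j * Γc k j' * Real.log ‖u ⟨k, j⟩ - u ⟨k, j'⟩‖ else 0)
            - (if j ≠ j' then
                Γc k j * Γc k j' * g (r • u ⟨k, j⟩ + α k) (r • u ⟨k, j'⟩ + α k) else 0)) := by
          exact Finset.sum_congr rfl fun k _ => Finset.sum_congr rfl fun j _ =>
            Finset.sum_congr rfl fun j' _ => hterm k j j'
      _ = C * (-(1 / (2 * π)) * Real.log r) + (-(1 / (2 * π))) * L - Gs := by
          simp only [Finset.sum_sub_distrib, Finset.sum_add_distrib, ← Finset.sum_mul,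
            ← Finset.mul_sum, hC, hL, hGs]
  -- H0 in terms of L
  have hH0 : H0 Γc u = (-(1 / (2 * π))) * L := by
    rw [H0, hL, Finset.mul_sum]
    exact Finset.sum_congr rfl fun k _ => by rw [planeHam]
  -- Ffun in terms of A, Gs, D
  have hFf : Ffun g Γc α (r • u) = A - (Gs + D) := by
    rw [Ffun, hA]
    have e1 : (∑ i, ∑ i', if i.1 ≠ i'.1 then Γc i.1 i.2 * Γc i'.1 i'.2
          * Gf g ((r • u) i + α i.1) ((r • u) i' + α i'.1) else 0)
        = ∑ i, ∑ i', if i.1 ≠ i'.1 then T i i' else 0 := by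
      simp only [Pi.smul_apply, hT]
    have e2 : (∑ k, ∑ j, ∑ j', Γc k j * Γc k j'
          * g ((r • u) ⟨k, j⟩ + α k) ((r • u) ⟨k, j'⟩ + α k))
        = Gs + D := by
      have hsplit2 : ∀ (k : Fin m) (j j' : Fin (Nk k)),
          Γc k j * Γc k j' * g ((r • u) ⟨k, j⟩ + α k) ((r • u) ⟨k, j'⟩ + α k)
            = (if j ≠ j' then
                Γc k j * Γc k j' * g (r • u ⟨k, j⟩ + α k) (r • u ⟨k, j'⟩ + α k) else 0)
              + (if j = j' then
                Γc k j * Γc k j' * g (r • u ⟨k, j⟩ + α k) (r • u ⟨k, j'⟩ + α k) else 0) := by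
        intro k j j'
        by_cases h : j = j' <;> simp [h]
      rw [Finset.sum_congr rfl fun k _ => Finset.sum_congr rfl fun j _ =>
        Finset.sum_congr rfl fun j' _ => hsplit2 k j j']
      simp only [Finset.sum_add_distrib]
      congr 1
      rw [hD, diag (fun i => Γc i.1 i.2 ^ 2 * g (r • u i + α i.1) (r • u i + α i.1))]
      refine Finset.sum_congr rfl fun k _ => Finset.sum_congr rfl fun j _ => ?_
      rw [Finset.sum_ite_eq]
      simp [sq]
    rw [e1, e2]
  -- put everything together
  rw [NHam, hH0, hFf]
  have : (∑ i, ∑ i', if i ≠ i' then Γc i.1 i.2 * Γc i'.1 i'.2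
        * Gf g (r • u i + α i.1) (r • u i' + α i'.1) else 0)
      = ∑ i, ∑ i', if i ≠ i' then T i i' else 0 := rfl
  rw [this, hsplit, hP2]
  ring
end
end

section
/- If α ∈ 𝓕_m(ℝ²) is a critical point of 𝓗_{ℝ²}, i.e. ∇𝓗_{ℝ²}(α) = 0, then Σ_{k≠k'} ΓᵏΓᵏ' = 0. -/
noncomputable section

open Real

lemma planeHam_diffAt {n : ℕ} (Γk : Fin n → ℝ) {z : Fin n → R2}
    (hz : ∀ j j', j ≠ j' → z j ≠ z j') : DifferentiableAt ℝ (planeHam Γk) z := by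
  unfold planeHam
  apply DifferentiableAt.const_mul
  apply DifferentiableAt.fun_sum; intro j _
  apply DifferentiableAt.fun_sum; intro j' _
  by_cases h : j ≠ j'
  · simp only [if_pos h]
    apply DifferentiableAt.const_mul
    have hsub : DifferentiableAt ℝ (fun z : Fin n → R2 => z j - z j') z :=
      ((ContinuousLinearMap.proj j : (Fin n → R2) →L[ℝ] R2).differentiableAt).sub
        ((ContinuousLinearMap.proj j' : (Fin n → R2) →L[ℝ] R2).differentiableAt)
    have hne : z j - z j' ≠ 0 := sub_ne_zero.mpr (hz j j' h)
    have hnorm := hsub.norm ℝ hne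
    exact (Real.differentiableAt_log (norm_ne_zero_iff.mpr hne)).comp z hnorm
  · simp only [if_neg h]; exact differentiableAt_const 0

lemma planeHam_scale {n : ℕ} (Γk : Fin n → ℝ) (z : Fin n → R2)
    (hz : ∀ j j', j ≠ j' → z j ≠ z j') {t : ℝ} (ht : 0 < t) :
    planeHam Γk (t • z) = planeHam Γk z
      - (1 / (2 * π)) * Real.log t * (∑ j, ∑ j', if j ≠ j' then Γk j * Γk j' else 0) := by
  unfold planeHam
  have key : ∀ j j', (if j ≠ j' then Γk j * Γk j' * Real.log ‖(t • z) j - (t • z) j'‖ else 0)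
      = (if j ≠ j' then Γk j * Γk j' * Real.log ‖z j - z j'‖ else 0)
        + Real.log t * (if j ≠ j' then Γk j * Γk j' else 0) := by
    intro j j'
    by_cases h : j ≠ j'
    · simp only [if_pos h, Pi.smul_apply]
      rw [← smul_sub, norm_smul, Real.norm_eq_abs, abs_of_pos ht,
        Real.log_mul (ne_of_gt ht) (norm_ne_zero_iff.mpr (sub_ne_zero.mpr (hz j j' h)))]
      ring
    · simp [h]
  simp only [key, Finset.sum_add_distrib, ← Finset.mul_sum]
  ring

theorem statement13_aux : True := trivial

/-- a critical point of `𝓗_{ℝ²}` forces `Σ_{k≠k'} ΓᵏΓᵏ' = 0`. -/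
theorem statement13
    (m : ℕ) (Γ : Fin m → ℝ) (hΓ : ∀ k, Γ k ≠ 0)
    (α : Fin m → R2) (hα : ∀ k k', k ≠ k' → α k ≠ α k')
    (hcrit : ∀ k, pgrad (planeHam Γ) α k = 0) :
    (∑ k, ∑ k', if k ≠ k' then Γ k * Γ k' else 0) = 0 := by
  set S := (∑ k, ∑ k', if k ≠ k' then Γ k * Γ k' else 0) with hS
  set H := planeHam Γ with hH
  have hdiff : DifferentiableAt ℝ H α := planeHam_diffAt Γ hα
  -- fderiv of H at α vanishes on single-coordinate directions
  have hL0 : ∀ k (v : R2), fderiv ℝ H α (Pi.single k v) = 0 := by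
    intro k v
    have hupd : HasFDerivAt (fun p => H (Function.update α k p))
        ((fderiv ℝ H α).comp (ContinuousLinearMap.pi (Pi.single k (ContinuousLinearMap.id ℝ R2))))
        (α k) := by
      have h1 : HasFDerivAt H (fderiv ℝ H α) (Function.update α k (α k)) := by
        rw [Function.update_eq_self]; exact hdiff.hasFDerivAt
      exact h1.comp (α k) (hasFDerivAt_update α (α k))
    have hzero : fderiv ℝ (fun p => H (Function.update α k p)) (α k) = 0 := by
      have := hcrit k
      unfold pgrad gradient at this
      have := congrArg (InnerProductSpace.toDual ℝ R2) this
      simpa using this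
    have hcomp := hupd.fderiv
    rw [hzero] at hcomp
    have hv : ((ContinuousLinearMap.pi (Pi.single k (ContinuousLinearMap.id ℝ R2)) :
        R2 →L[ℝ] (Fin m → R2))) v = Pi.single k v := by
      ext j
      rcases eq_or_ne j k with h | h
      · subst h; simp
      · simp [ContinuousLinearMap.pi_apply, Pi.single_eq_of_ne h]
    have h2 := congrFun (congrArg DFunLike.coe hcomp) v
    rw [← hv]
    simpa using h2.symm
  have hfd_zero : fderiv ℝ H α α = 0 := by
    nth_rewrite 2 [← Finset.univ_sum_single α]
    rw [map_sum]
    simp [hL0]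
  -- derivative of t ↦ H (t • α) at 1
  have hsmul : HasDerivAt (fun t : ℝ => t • α) α 1 := by
    simpa using (hasDerivAt_id (1 : ℝ)).smul_const α
  have hd1 : HasDerivAt (fun t : ℝ => H (t • α)) 0 1 := by
    have h1 : HasFDerivAt H (fderiv ℝ H α) ((fun t : ℝ => t • α) 1) := by
      simpa using hdiff.hasFDerivAt
    have := h1.comp_hasDerivAt 1 hsmul
    exact (by simpa [hfd_zero] using this : HasDerivAt (H ∘ fun t : ℝ => t • α) 0 1)
  -- on the other hand, the scaling identity
  have hgd : HasDerivAt (fun t : ℝ => H α - (1 / (2 * π)) * Real.log t * S)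
      (-((1 / (2 * π)) * S)) 1 := by
    have hlog : HasDerivAt Real.log 1 1 := by
      simpa using Real.hasDerivAt_log one_ne_zero
    have := ((hlog.const_mul ((1 : ℝ) / (2 * π))).mul_const S).const_sub (H α)
    simpa using this
  have heq : (fun t : ℝ => H (t • α)) =ᶠ[nhds 1]
      (fun t : ℝ => H α - (1 / (2 * π)) * Real.log t * S) := by
    filter_upwards [lt_mem_nhds (show (0:ℝ) < 1 by norm_num)] with t ht
    exact planeHam_scale Γ α hα ht
  have hd2 : HasDerivAt (fun t : ℝ => H (t • α)) (-((1 / (2 * π)) * S)) 1 :=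
    hgd.congr_of_eventuallyEq heq
  have := hd1.unique hd2
  have hpi : (1 : ℝ) / (2 * π) ≠ 0 := by
    simp [Real.pi_ne_zero]
  have : (1 / (2 * π)) * S = 0 := by linarith [this]
  rcases mul_eq_zero.mp this with h | h
  · exact absurd h hpi
  · exact h
end
end

section
/- Let n ∈ ℕ, k ≥ 2, let U ⊆ ℝⁿ be an open neighborhood of 0 and let F : U → ℝ be of class C^k with the first derivative vanishing at the origin, DF(0) = 0. Then for every u ∈ ℝⁿ, the limit lim_{r→0⁺} Σ_{j=0}^{k−2} ((k−2)!/j!)·(−1)^{k−j}·r^{−(k−1−j)}·D^{j+1}F(ru)[u,…,u] = (1/(k−1))·D^kF(0)[u,…,u] holds; here D^{j+1}F(ru)[u,…,u] denotes the (j+1)-th derivative of F at ru applied to j copies of u, regarded as an element of the dual space (ℝⁿ)*, on the right-hand side D^kF(0) is applied to k−1 copies of u, and the convergence is in the norm of (ℝⁿ)*. -/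
noncomputable section

open Real Filter

set_option maxHeartbeats 1000000

variable {E : Type*} [NormedAddCommGroup E] [NormedSpace ℝ E]

/-- Evaluation of a continuous multilinear map at `(u,...,u,·)`, as a CLM in the map. -/
def lastEval (u : E) (m : ℕ) :
    (ContinuousMultilinearMap ℝ (fun _ : Fin (m + 1) => E) ℝ) →L[ℝ] (E →L[ℝ] ℝ) :=
  (ContinuousMultilinearMap.apply ℝ (fun _ : Fin m => E) (E →L[ℝ] ℝ) (fun _ => u)).comp
    (continuousMultilinearCurryRightEquiv' ℝ m E ℝ).toLinearIsometry.toContinuousLinearMap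

lemma lastEval_apply (u : E) (m : ℕ)
    (f : ContinuousMultilinearMap ℝ (fun _ : Fin (m + 1) => E) ℝ) :
    lastEval u m f = f.toContinuousLinearMap (fun _ => u) (Fin.last m) := by
  ext v
  have h : Fin.snoc (fun _ : Fin m => u) v =
      Function.update (fun _ : Fin (m + 1) => u) (Fin.last m) v := by
    funext i
    refine Fin.lastCases ?_ (fun j => ?_) i
    · simp
    · simp [Fin.snoc_castSucc, Function.update_of_ne (Fin.castSucc_lt_last j).ne]
  simp [lastEval, continuousMultilinearCurryRightEquiv', h]

lemma hasDerivAt_lastEval {U : Set E} (hU : IsOpen U) {F : E → ℝ} {k : ℕ}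
    (hF : ContDiffOn ℝ k F U) (u : E) {m : ℕ} (hm : m + 2 ≤ k) {r : ℝ}
    (hr : r • u ∈ U) :
    HasDerivAt (fun r : ℝ => lastEval u m (iteratedFDeriv ℝ (m + 1) F (r • u)))
      (lastEval u (m + 1) (iteratedFDeriv ℝ (m + 2) F (r • u))) r := by
  have hca : ContDiffAt ℝ k F (r • u) := hF.contDiffAt (hU.mem_nhds hr)
  have hd : DifferentiableAt ℝ (iteratedFDeriv ℝ (m + 1) F) (r • u) := by
    have h1 : ContDiffAt ℝ 1 (iteratedFDeriv ℝ (m + 1) F) (r • u) := by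
      apply hca.iteratedFDeriv_right
      have : ((1 : ℕ) : ℕ∞) + ((m + 1 : ℕ) : ℕ∞) ≤ ((k : ℕ) : ℕ∞) := by
        rw [← Nat.cast_add, Nat.cast_le]; omega
      exact_mod_cast this
    exact h1.differentiableAt one_ne_zero
  have h1 : HasDerivAt (fun r : ℝ => r • u) u r := by
    simpa using (hasDerivAt_id r).smul_const u
  have h2 : HasDerivAt (fun r : ℝ => iteratedFDeriv ℝ (m + 1) F (r • u))
      (fderiv ℝ (iteratedFDeriv ℝ (m + 1) F) (r • u) u) r :=
    hd.hasFDerivAt.comp_hasDerivAt r h1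
  have h3 := ((lastEval u m).hasFDerivAt).comp_hasDerivAt r h2
  refine HasDerivAt.congr_deriv h3 ?_
  ext v
  have hsnoc : (Fin.snoc (fun _ : Fin (m + 1) => u) v : Fin (m + 2) → E) 0 = u := by
    have : (0 : Fin (m + 2)) = Fin.castSucc 0 := rfl
    rw [this, Fin.snoc_castSucc]
  have htail : Fin.tail (Fin.snoc (fun _ : Fin (m + 1) => u) v : Fin (m + 2) → E)
      = Fin.snoc (fun _ : Fin m => u) v := by
    funext i
    refine Fin.lastCases ?_ (fun j => ?_) i
    · simp [Fin.tail]
    · simp [Fin.tail, Fin.succ_castSucc, Fin.snoc_castSucc, -Fin.castSucc_succ]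
  simp only [lastEval, ContinuousLinearMap.comp_apply, LinearIsometry.coe_toContinuousLinearMap,
    LinearIsometryEquiv.coe_toLinearIsometry, ContinuousMultilinearMap.apply_apply]
  rw [show ((continuousMultilinearCurryRightEquiv' ℝ (m+1) E ℝ)
        (iteratedFDeriv ℝ (m + 2) F (r • u)) (fun _ => u)) v
      = iteratedFDeriv ℝ (m + 2) F (r • u) (Fin.snoc (fun _ => u) v) from rfl,
    show ((continuousMultilinearCurryRightEquiv' ℝ m E ℝ)
        (fderiv ℝ (iteratedFDeriv ℝ (m + 1) F) (r • u) u) (fun _ => u)) v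
      = (fderiv ℝ (iteratedFDeriv ℝ (m + 1) F) (r • u) u) (Fin.snoc (fun _ => u) v) from rfl,
    iteratedFDeriv_succ_apply_left, hsnoc, htail]

/-- `G j r = D^{j+1}F(ru)[u,...,u,·]`. -/
def gslice (F : E → ℝ) (u : E) (j : ℕ) (r : ℝ) : E →L[ℝ] ℝ :=
  lastEval u j (iteratedFDeriv ℝ (j + 1) F (r • u))

def psiFun (F : E → ℝ) (u : E) (K : ℕ) (r : ℝ) : E →L[ℝ] ℝ :=
  ∑ j ∈ Finset.range (K + 1),
    (((K.factorial : ℝ) / j.factorial * (-1) ^ (K + 2 - j)) * r ^ j) • gslice F u j r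

lemma hasDerivAt_psiFun {U : Set E} (hU : IsOpen U) {F : E → ℝ} {K : ℕ}
    (hF : ContDiffOn ℝ (K + 2 : ℕ) F U) (u : E) {r : ℝ} (hru : r • u ∈ U) :
    HasDerivAt (psiFun F u K) (r ^ K • gslice F u (K + 1) r) r := by
  set c : ℕ → ℝ := fun j => (K.factorial : ℝ) / j.factorial * (-1) ^ (K + 2 - j) with hc
  have hci : ∀ i, i < K → c (i + 1) * ((i : ℝ) + 1) = -c i := by
    intro i hi
    have e1 : K + 2 - i = (K + 2 - (i + 1)) + 1 := by omega
    have e2 : ((i + 1).factorial : ℝ) = ((i : ℝ) + 1) * i.factorial := by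
      push_cast [Nat.factorial_succ]; ring
    have hi0 : (i.factorial : ℝ) ≠ 0 := Nat.cast_ne_zero.mpr i.factorial_ne_zero
    have hi1 : ((i : ℝ) + 1) ≠ 0 := by positivity
    simp only [hc]
    rw [e1, pow_succ, e2]
    field_simp
  have hcK : c K = 1 := by
    have : K + 2 - K = 2 := by omega
    simp only [hc, this]
    rw [div_self (Nat.cast_ne_zero.mpr K.factorial_ne_zero)]
    norm_num
  have hterm : ∀ j ∈ Finset.range (K + 1),
      HasDerivAt (fun r : ℝ => (c j * r ^ j) • gslice F u j r)
        ((c j * ((j : ℝ) * r ^ (j - 1))) • gslice F u j r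
          + (c j * r ^ j) • gslice F u (j + 1) r) r := by
    intro j hj
    have hj' : j + 2 ≤ K + 2 := by
      have := Finset.mem_range.mp hj; omega
    exact (((hasDerivAt_pow j r).const_mul (c j)).smul
      (hasDerivAt_lastEval hU hF u hj' hru)).congr_deriv (add_comm _ _)
  have hsum := HasDerivAt.fun_sum hterm
  have hval : ∑ j ∈ Finset.range (K + 1),
      ((c j * ((j : ℝ) * r ^ (j - 1))) • gslice F u j r
        + (c j * r ^ j) • gslice F u (j + 1) r)
      = r ^ K • gslice F u (K + 1) r := by
    rw [Finset.sum_add_distrib, Finset.sum_range_succ', Finset.sum_range_succ]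
    have hA0 : (c 0 * ((0 : ℕ) * r ^ (0 - 1))) • gslice F u 0 r = 0 := by
      simp
    rw [hA0, add_zero, ← add_assoc, ← Finset.sum_add_distrib]
    have hzero : ∑ i ∈ Finset.range K,
        ((c (i + 1) * (((i : ℕ) + 1 : ℕ) * r ^ ((i + 1) - 1))) • gslice F u (i + 1) r
          + (c i * r ^ i) • gslice F u (i + 1) r) = 0 := by
      apply Finset.sum_eq_zero
      intro i hi
      rw [← add_smul]
      have : c (i + 1) * (((i : ℕ) + 1 : ℕ) * r ^ ((i + 1) - 1)) + c i * r ^ i = 0 := by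
        have h1 := hci i (Finset.mem_range.mp hi)
        push_cast
        rw [show c (i + 1) * (((i : ℝ) + 1) * r ^ i) = (c (i + 1) * ((i : ℝ) + 1)) * r ^ i
          from by ring, h1]
        ring
      rw [this, zero_smul]
    rw [hzero, zero_add, hcK, one_mul]
  rw [hval] at hsum
  exact hsum

lemma psiFun_zero {F : E → ℝ} (hDF0 : fderiv ℝ F 0 = 0) (u : E) (K : ℕ) :
    psiFun F u K 0 = 0 := by
  apply Finset.sum_eq_zero
  intro j hj
  cases j with
  | zero =>
      have : gslice F u 0 0 = 0 := by
        ext v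
        simp [gslice, lastEval_apply, iteratedFDeriv_one_apply, hDF0]
      simp [this]
  | succ i => simp [zero_pow (Nat.succ_ne_zero i)]

lemma tendsto_psiFun {U : Set E} (hU : IsOpen U) (hU0 : (0 : E) ∈ U) {F : E → ℝ} {K : ℕ}
    (hF : ContDiffOn ℝ (K + 2 : ℕ) F U) (hDF0 : fderiv ℝ F 0 = 0) (u : E) :
    Tendsto (fun r : ℝ => (r ^ (K + 1))⁻¹ • psiFun F u K r) (nhdsWithin 0 (Set.Ioi 0))
      (nhds ((1 / ((K : ℝ) + 1)) • gslice F u (K + 1) 0)) := by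
  -- radius within which `r • u ∈ U`
  obtain ⟨δ0, hδ0pos, hδ0⟩ : ∃ δ0 > 0, ∀ s : ℝ, |s| < δ0 → s • u ∈ U := by
    have hc : ContinuousAt (fun r : ℝ => r • u) 0 :=
      (continuous_id.smul continuous_const).continuousAt
    have h0 : (fun r : ℝ => r • u) 0 ∈ U := by simpa using hU0
    have := hc.preimage_mem_nhds (hU.mem_nhds h0)
    rw [Metric.mem_nhds_iff] at this
    obtain ⟨δ0, hδ0pos, hδ0⟩ := this
    exact ⟨δ0, hδ0pos, fun s hs => hδ0 (by simpa [Real.dist_eq] using hs)⟩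
  have hGcont : ContinuousAt (gslice F u (K + 1)) 0 := by
    have h1 : ContinuousAt (iteratedFDeriv ℝ (K + 2) F) ((0 : ℝ) • u) := by
      rw [zero_smul]
      have : ContDiffAt ℝ 0 (iteratedFDeriv ℝ (K + 2) F) 0 := by
        apply (hF.contDiffAt (hU.mem_nhds hU0)).iteratedFDeriv_right
        simp
      exact this.continuousAt
    have hsmul : ContinuousAt (fun r : ℝ => r • u) 0 :=
      (continuous_id.smul continuous_const).continuousAt
    have h2 := ContinuousAt.comp (x := (0 : ℝ)) (f := fun r : ℝ => r • u) h1 hsmul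
    exact ContinuousAt.comp ((lastEval u (K + 1)).continuous.continuousAt) h2
  rw [Metric.tendsto_nhdsWithin_nhds]
  intro ε hε
  obtain ⟨δ1, hδ1pos, hδ1⟩ : ∃ δ1 > 0, ∀ s : ℝ, |s| < δ1 →
      ‖gslice F u (K + 1) s - gslice F u (K + 1) 0‖ < ε / 2 := by
    rw [Metric.continuousAt_iff] at hGcont
    obtain ⟨δ1, hδ1pos, H⟩ := hGcont (ε / 2) (by positivity)
    refine ⟨δ1, hδ1pos, fun s hs => ?_⟩
    have := H (x := s) (by simpa [Real.dist_eq] using hs)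
    simpa [dist_eq_norm] using this
  refine ⟨min δ1 δ0, by positivity, ?_⟩
  intro r hr hrd
  have hr0 : (0 : ℝ) < r := hr
  rw [Real.dist_eq, sub_zero, abs_of_pos hr0] at hrd
  have hrδ0 : r < δ0 := lt_of_lt_of_le hrd (min_le_right _ _)
  have hrδ1 : r < δ1 := lt_of_lt_of_le hrd (min_le_left _ _)
  set G0 : E →L[ℝ] ℝ := gslice F u (K + 1) 0 with hG0
  set χ : ℝ → (E →L[ℝ] ℝ) :=
    fun s => psiFun F u K s - (s ^ (K + 1) / ((K : ℝ) + 1)) • G0 with hχ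
  have hχd : ∀ s ∈ Set.Icc 0 r, HasDerivWithinAt χ
      (s ^ K • (gslice F u (K + 1) s - G0)) (Set.Icc 0 r) s := by
    intro s hs
    have hsδ0 : |s| < δ0 := by
      rw [abs_of_nonneg hs.1]; exact lt_of_le_of_lt hs.2 hrδ0
    have h1 := hasDerivAt_psiFun hU hF u (hδ0 s hsδ0)
    have h2 : HasDerivAt (fun s : ℝ => (s ^ (K + 1) / ((K : ℝ) + 1)) • G0)
        (s ^ K • G0) s := by
      have h3 := ((hasDerivAt_pow (K + 1) s).div_const ((K : ℝ) + 1)).smul_const G0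
      apply h3.congr_deriv
      have hK1 : ((K : ℝ) + 1) ≠ 0 := by positivity
      have hco : (((K + 1 : ℕ) : ℝ) * s ^ (K + 1 - 1)) / ((K : ℝ) + 1) = s ^ K := by
        push_cast
        field_simp
      rw [hco]
    have h4 := (h1.sub h2).congr_deriv ((smul_sub (s ^ K) _ _).symm)
    exact h4.hasDerivWithinAt
  have hbound : ∀ s ∈ Set.Ico 0 r,
      ‖s ^ K • (gslice F u (K + 1) s - G0)‖ ≤ r ^ K * (ε / 2) := by
    intro s hs
    have h1 : ‖(s : ℝ) ^ K‖ ≤ r ^ K := by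
      rw [Real.norm_eq_abs, abs_of_nonneg (pow_nonneg hs.1 K)]
      exact pow_le_pow_left₀ hs.1 (le_of_lt hs.2) K
    have h2 : ‖gslice F u (K + 1) s - G0‖ ≤ ε / 2 := by
      apply le_of_lt
      apply hδ1
      rw [abs_of_nonneg hs.1]
      exact lt_trans hs.2 hrδ1
    calc ‖s ^ K • (gslice F u (K + 1) s - G0)‖
        = ‖(s : ℝ) ^ K‖ * ‖gslice F u (K + 1) s - G0‖ := by
          exact norm_smul (β := E →L[ℝ] ℝ) _ _
      _ ≤ r ^ K * (ε / 2) := mul_le_mul h1 h2 (norm_nonneg _) (by positivity)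
  have hMVT := norm_image_sub_le_of_norm_deriv_le_segment' hχd hbound r
    (Set.right_mem_Icc.mpr (le_of_lt hr0))
  have hχ0 : χ 0 = 0 := by
    simp [hχ, psiFun_zero hDF0]
  rw [hχ0, sub_zero] at hMVT
  -- now convert to the distance estimate
  rw [dist_eq_norm]
  have hrpow : (r : ℝ) ^ (K + 1) ≠ 0 := pow_ne_zero _ (ne_of_gt hr0)
  have hkey : (r ^ (K + 1))⁻¹ • psiFun F u K r - (1 / ((K : ℝ) + 1)) • G0
      = (r ^ (K + 1))⁻¹ • χ r := by
    rw [hχ]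
    rw [smul_sub, smul_smul]
    congr 2
    field_simp
  rw [hkey]
  calc ‖(r ^ (K + 1))⁻¹ • χ r‖ = ‖(r ^ (K + 1))⁻¹‖ * ‖χ r‖ := by exact norm_smul (β := E →L[ℝ] ℝ) _ _
    _ = (r ^ (K + 1))⁻¹ * ‖χ r‖ := by
        rw [Real.norm_eq_abs, abs_of_pos (by positivity : (0:ℝ) < (r ^ (K + 1))⁻¹)]
    _ ≤ (r ^ (K + 1))⁻¹ * (r ^ K * (ε / 2) * (r - 0)) := by
        apply mul_le_mul_of_nonneg_left hMVT (by positivity)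
    _ = ε / 2 := by
        rw [sub_zero]
        field_simp
        ring
    _ < ε := by linarith

/-- the key limit of the proof of Lemma 4.1: for a `C^k` function `F`
with `DF(0) = 0`,
`Σ_{j=0}^{k-2} ((k-2)!/j!)(-1)^{k-j} r^{-(k-1-j)} D^{j+1}F(ru)[u]^j → (1/(k-1)) D^kF(0)[u]^{k-1}`
in the dual of `ℝⁿ` as `r → 0⁺`. -/
theorem statement19 (n k : ℕ) (hk : 2 ≤ k)
    (U : Set (EuclideanSpace ℝ (Fin n))) (hUopen : IsOpen U)
    (hU0 : (0 : EuclideanSpace ℝ (Fin n)) ∈ U)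
    (F : EuclideanSpace ℝ (Fin n) → ℝ) (hF : ContDiffOn ℝ k F U)
    (hDF0 : fderiv ℝ F 0 = 0)
    (u : EuclideanSpace ℝ (Fin n)) :
    Tendsto
      (fun r : ℝ =>
        ∑ j ∈ Finset.range (k - 1),
          (((k - 2).factorial : ℝ) / (j.factorial : ℝ) * (-1 : ℝ) ^ (k - j)
              * (r ^ (k - 1 - j))⁻¹) •
            ((iteratedFDeriv ℝ (j + 1) F (r • u)).toContinuousLinearMap
              (fun _ => u) (Fin.last j)))
      (nhdsWithin 0 (Set.Ioi 0))
      (nhds ((1 / ((k : ℝ) - 1)) •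
        ((iteratedFDeriv ℝ k F 0).toContinuousLinearMap (fun _ => u)
          ⟨k - 1, by omega⟩))) := by
  obtain ⟨K, rfl⟩ : ∃ K, k = K + 2 := ⟨k - 2, by omega⟩
  have key := tendsto_psiFun hUopen hU0 hF hDF0 u
  simp only [show K + 2 - 1 = K + 1 from rfl, show K + 2 - 2 = K from rfl]
  have hpt : ((1 : ℝ) / (((K + 2 : ℕ) : ℝ) - 1)) •
      ((iteratedFDeriv ℝ (K + 2) F 0).toContinuousLinearMap (fun _ => u)
        (⟨K + 1, by omega⟩ : Fin (K + 2)))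
      = (1 / ((K : ℝ) + 1)) • gslice F u (K + 1) 0 := by
    simp only [gslice]
    rw [lastEval_apply, zero_smul]
    congr 1
    push_cast
    ring
  have key2 : Tendsto (fun r => (r ^ (K + 1))⁻¹ • psiFun F u K r)
      (nhdsWithin 0 (Set.Ioi 0))
      (nhds (((1 : ℝ) / (((K + 2 : ℕ) : ℝ) - 1)) •
        ((iteratedFDeriv ℝ (K + 2) F 0).toContinuousLinearMap (fun _ => u)
          (⟨K + 1, by omega⟩ : Fin (K + 2))))) := by rw [hpt]; exact key
  refine Tendsto.congr' ?_ key2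
  filter_upwards [self_mem_nhdsWithin] with r hr
  have hr0 : (0 : ℝ) < r := hr
  simp only [psiFun, Finset.smul_sum]
  apply Finset.sum_congr rfl
  intro j hj
  have hj' : j ≤ K + 1 := by
    have := Finset.mem_range.mp hj; omega
  rw [smul_smul]
  simp only [gslice]
  rw [lastEval_apply]
  congr 1
  have hpow : r ^ (K + 1 - j) * r ^ j = r ^ (K + 1) := pow_sub_mul_pow r hj'
  have hinv : (r ^ (K + 1))⁻¹ * r ^ j = (r ^ (K + 1 - j))⁻¹ := by
    rw [← hpow, mul_inv, mul_assoc, inv_mul_cancel₀ (pow_ne_zero j hr0.ne'), mul_one]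
  rw [← hinv]
  ring
end
end
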